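/- Let $F$ be a symmetric $n \times n$ matrix with $F_{ij} = f(x_i, x_j)$ for $i < j$, where $f \in \mathcal{BL}[c_l, c_L, 0]$ is strictly bi-Lipschitz (slack $c_e = 0$) and $\mathbf{x}, \mathbf{x}' \in \boldsymbol{\Pi}_n$ are both regular configurations with $(\mathbf{x}, f)$ and $(\mathbf{x}', f')$ both representations of $F$. Then there exists an orthogonal transformation $Q$ of $\mathbb{R}^2$ such that $\mathbf{x} = Q\mathbf{x}'$. -/

import Mathlib

open Real

/-- Geodesic distance on the unit circle `Circle ⊆ ℂ`. -/
noncomputable def gd (z w : Circle) : ℝ := |Complex.arg ((z : ℂ) / (w : ℂ))|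

/-- A configuration is regular if it enumerates (via some permutation) the
regular `n`-point grid `{e^{2πik/n}}` on the circle, i.e. it belongs to `Π_n`. -/
def RegularConfig (n : ℕ) (x : Fin n → Circle) : Prop :=
  ∃ σ : Equiv.Perm (Fin n), ∀ j, x j = Circle.exp (2 * π * ((σ j : Fin n) : ℕ) / n)

/-- The bi-Lipschitz class `BL[c_l, c_L, ε]` of affinity functions on the
circle: symmetric, `[0,1]`-valued, upper Lipschitz with slack `ε` and with a
minimal decay `c_l` (with slack `ε`) in the geodesic distance. -/
def BiLip (cl cL ε : ℝ) (f : Circle → Circle → ℝ) : Prop :=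
  (∀ x y, f x y ∈ Set.Icc (0 : ℝ) 1) ∧
  (∀ x y, f x y = f y x) ∧
  (∀ x y y', |f x y - f x y'| ≤ cL * gd y y' + ε) ∧
  (∀ x y y', gd x y' ≤ gd x y → f x y' - f x y ≥ cl * (gd x y - gd x y') - ε)

namespace Stmt12Aux

noncomputable def E (n : ℕ) (w : ZMod n) : Circle := Circle.exp (2 * π * w.val / n)

def dd (n : ℕ) (w : ZMod n) : ℕ := min w.val (n - w.val)

lemma exp_mod (n : ℕ) [NeZero n] (m : ℕ) :
    Circle.exp (2 * π * m / n) = Circle.exp (2 * π * ((m % n : ℕ) : ℝ) / n) := by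
  have hn : (0:ℝ) < n := by exact_mod_cast Nat.pos_of_ne_zero (NeZero.ne n)
  have h0 : ((n * (m / n) + m % n : ℕ) : ℝ) = (m : ℝ) := by rw [Nat.div_add_mod]
  rw [Nat.cast_add, Nat.cast_mul] at h0
  have h : (2 * π * ((m % n : ℕ) : ℝ) / n : ℝ) = 2 * π * m / n - (m / n : ℕ) * (2 * π) := by
    field_simp
    linear_combination h0
  rw [h, Circle.periodic_exp.sub_nat_mul_eq]

lemma E_add (n : ℕ) [NeZero n] (u v : ZMod n) : E n (u + v) = E n u * E n v := by
  rw [E, E, E, ← Circle.exp_add, ZMod.val_add, ← exp_mod]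
  congr 1
  push_cast
  ring

lemma E_coe_sub (n : ℕ) [NeZero n] (u v : ZMod n) :
    ((E n (u - v) : Circle) : ℂ) = (E n u : ℂ) / (E n v : ℂ) := by
  have h : E n v * E n (u - v) = E n u := by rw [← E_add]; ring_nf
  rw [← h]
  push_cast
  field_simp

lemma E_zero (n : ℕ) [NeZero n] : E n 0 = 1 := by
  simp [E]

lemma E_neg_coe (n : ℕ) [NeZero n] (w : ZMod n) :
    ((E n (-w) : Circle) : ℂ) = (starRingEnd ℂ) ((E n w : Circle) : ℂ) := by
  have h1 : E n (-w) * E n w = 1 := by rw [← E_add, neg_add_cancel, E_zero]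
  rw [eq_inv_of_mul_eq_one_left h1, Circle.coe_inv_eq_conj]

lemma gd_E (n : ℕ) [NeZero n] (u v : ZMod n) :
    gd (E n u) (E n v) = 2 * π / n * dd n (u - v) := by
  have hn : (0:ℝ) < n := by exact_mod_cast Nat.pos_of_ne_zero (NeZero.ne n)
  rw [gd, ← E_coe_sub]
  set w := u - v with hw
  have hv : w.val < n := ZMod.val_lt w
  have hvr : ((w.val : ℕ) : ℝ) < n := by exact_mod_cast hv
  show |Complex.arg ((Circle.exp (2 * π * w.val / n) : Circle) : ℂ)| = _
  rcases le_or_gt (2 * w.val) n with h | h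
  · have hr : 2 * ((w.val : ℕ) : ℝ) ≤ n := by exact_mod_cast h
    have h1 : (-π : ℝ) < 2 * π * w.val / n := by
      have : (0:ℝ) ≤ 2 * π * w.val / n := by positivity
      linarith [pi_pos]
    have h2 : (2 * π * w.val / n : ℝ) ≤ π := by
      rw [div_le_iff₀ hn]; nlinarith [pi_pos]
    rw [Circle.arg_exp h1 h2, abs_of_nonneg (by positivity)]
    have hd : dd n w = w.val := by unfold dd; omega
    rw [hd]; ring
  · have hr : (n : ℝ) < 2 * ((w.val : ℕ) : ℝ) := by exact_mod_cast h
    have hper : Circle.exp (2 * π * w.val / n) =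
        Circle.exp (2 * π * w.val / n - 2 * π) := (Circle.periodic_exp.sub_eq _).symm
    have h1 : (-π : ℝ) < 2 * π * w.val / n - 2 * π := by
      have h3 : π * n < 2 * π * w.val := by nlinarith [pi_pos]
      have h4 := (lt_div_iff₀ hn).2 h3
      linarith
    have h2 : (2 * π * w.val / n - 2 * π : ℝ) ≤ π := by
      have : 2 * π * w.val / n < 2 * π := by
        rw [div_lt_iff₀ hn]; nlinarith [pi_pos]
      linarith [pi_pos]
    rw [hper, Circle.arg_exp h1 h2, abs_of_nonpos (by
      have : 2 * π * w.val / n ≤ 2 * π := by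
        rw [div_le_iff₀ hn]; nlinarith [pi_pos]
      linarith)]
    have hd : dd n w = n - w.val := by unfold dd; omega
    rw [hd, Nat.cast_sub hv.le]
    field_simp
    ring

lemma dd_inj {n : ℕ} [NeZero n] {u v : ZMod n} (h : dd n u = dd n v) : u = v ∨ u = -v := by
  have hu : u.val < n := ZMod.val_lt u
  have hv : v.val < n := ZMod.val_lt v
  unfold dd at h
  rcases eq_or_ne u.val v.val with he | hne
  · exact Or.inl (ZMod.val_injective n he)
  · right
    have hsum : u.val + v.val = n := by omega
    have hv0 : v ≠ 0 := by
      intro h0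
      rw [h0, ZMod.val_zero] at hsum
      omega
    apply ZMod.val_injective
    rw [ZMod.neg_val, if_neg hv0]
    omega

lemma dd_zero_iff {n : ℕ} [NeZero n] {u : ZMod n} : dd n u = 0 ↔ u = 0 := by
  have hu : u.val < n := ZMod.val_lt u
  unfold dd
  rw [← ZMod.val_eq_zero]
  omega

lemma map_univ_equiv' {α β γ : Type*} [Fintype α] [Fintype β] (e : α ≃ β) (F : β → γ) :
    Multiset.map (fun a => F (e a)) Finset.univ.val = Multiset.map F Finset.univ.val := by
  have h1 : Finset.univ.val.map (e : α → β) = Finset.univ.val := by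
    rw [← congr_arg Finset.val (Finset.map_univ_equiv e), Finset.map_val, Equiv.coe_toEmbedding]
  calc Multiset.map (fun a => F (e a)) Finset.univ.val
      = Multiset.map F (Finset.univ.val.map (e : α → β)) := by rw [Multiset.map_map]; rfl
    _ = Multiset.map F Finset.univ.val := by rw [h1]

lemma rank_le {n : ℕ} (a b : Fin n → ℝ)
    (hcmp : ∀ j k, a j < a k ↔ b j < b k)
    (hms : Multiset.map a Finset.univ.val = Multiset.map b Finset.univ.val)
    (j : Fin n) : ¬ a j < b j := by
  intro hlt
  have key : ∀ t : ℝ,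
      (Finset.univ.filter (fun k => a k < t)).card
        = (Finset.univ.filter (fun k => b k < t)).card := by
    intro t
    have h := congr_arg (Multiset.countP (fun r => r < t)) hms
    rw [Multiset.countP_map, Multiset.countP_map] at h
    simpa [Finset.card_def, Finset.filter_val] using h
  have e1 : Finset.univ.filter (fun k => b k < b j) = Finset.univ.filter (fun k => a k < a j) := by
    ext k
    simp [hcmp]
  have hss : Finset.univ.filter (fun k => a k < a j)
      ⊂ Finset.univ.filter (fun k => a k < b j) := by
    rw [Finset.ssubset_iff_of_subset]
    · exact ⟨j, by simp [hlt], by simp⟩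
    · intro k hk
      simp only [Finset.mem_filter, Finset.mem_univ, true_and] at hk ⊢
      linarith
  have h2 := Finset.card_lt_card hss
  have h3 := key (b j)
  rw [e1] at h3
  omega

lemma rank_eq {n : ℕ} (a b : Fin n → ℝ)
    (hcmp : ∀ j k, a j < a k ↔ b j < b k)
    (hms : Multiset.map a Finset.univ.val = Multiset.map b Finset.univ.val)
    (j : Fin n) : a j = b j :=
  le_antisymm (not_lt.1 (rank_le b a (fun j k => (hcmp j k).symm) hms.symm j))
    (not_lt.1 (rank_le a b hcmp hms j))

lemma ms_gd {n : ℕ} [NeZero n] (S : Fin n ≃ ZMod n) (i : Fin n) :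
    Multiset.map (fun j => gd (E n (S i)) (E n (S j))) Finset.univ.val
      = Multiset.map (fun w : ZMod n => 2 * π / n * dd n w) Finset.univ.val := by
  rw [map_univ_equiv' S (fun w => gd (E n (S i)) (E n w))]
  have h1 : (fun w : ZMod n => gd (E n (S i)) (E n w))
      = fun w : ZMod n => 2 * π / n * dd n (S i - w) := by
    funext w; rw [gd_E]
  rw [h1]
  have h2 := map_univ_equiv' (Equiv.subLeft (S i)) (fun w : ZMod n => 2 * π / n * dd n w)
  refine Eq.trans ?_ h2
  congr 1

lemma gd_self (z : Circle) : gd z z = 0 := by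
  simp [gd, div_self (Circle.coe_ne_zero z)]

lemma gd_nonneg (z w : Circle) : 0 ≤ gd z w := abs_nonneg _

lemma bilip_iff {cl cL : ℝ} (hcl : 0 < cl) {g : Circle → Circle → ℝ} (hg : BiLip cl cL 0 g)
    (p u v : Circle) : gd p u < gd p v ↔ g p v < g p u := by
  constructor
  · intro h
    have h2 := hg.2.2.2 p v u h.le
    nlinarith
  · intro h
    by_contra hc
    push_neg at hc
    have h2 := hg.2.2.2 p u v hc
    nlinarith

end Stmt12Aux

/-- Identifiability over regular configurations (second part of
Proposition 2.2 with `c_e = 0`): two regular representations of the same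
affinity matrix coincide up to an orthogonal transformation of the plane. -/
theorem stmt12 (n : ℕ) (cl cL : ℝ) (hcl : 0 < cl) (hclL : cl ≤ cL)
    (f f' : Circle → Circle → ℝ)
    (hf : BiLip cl cL 0 f) (hf' : BiLip cl cL 0 f')
    (x x' : Fin n → Circle) (hx : RegularConfig n x) (hx' : RegularConfig n x')
    (hrep : ∀ i j : Fin n, i < j → f (x i) (x j) = f' (x' i) (x' j)) :
    ∃ Q : ℂ ≃ₗᵢ[ℝ] ℂ, ∀ i, (x i : ℂ) = Q ((x' i : ℂ)) := by
  classical
  by_cases hn : n = 0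
  · subst hn
    exact ⟨LinearIsometryEquiv.refl ℝ ℂ, fun i => i.elim0⟩
  haveI : NeZero n := ⟨hn⟩
  obtain ⟨σ, hσ⟩ := hx
  obtain ⟨τ, hτ⟩ := hx'
  -- the canonical bijection Fin n ≃ ZMod n
  have hcbij : Function.Bijective (fun j : Fin n => ((j : ℕ) : ZMod n)) := by
    rw [Fintype.bijective_iff_injective_and_card]
    refine ⟨fun a b hab => ?_, by simp⟩
    have h := congr_arg ZMod.val hab
    rw [ZMod.val_cast_of_lt a.isLt, ZMod.val_cast_of_lt b.isLt] at h
    exact Fin.ext h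
  set cE : Fin n ≃ ZMod n := Equiv.ofBijective _ hcbij with hcE
  have hcEval : ∀ j : Fin n, (cE j).val = (j : ℕ) := by
    intro j
    show (((j : ℕ) : ZMod n)).val = (j : ℕ)
    exact ZMod.val_cast_of_lt j.isLt
  set S : Fin n ≃ ZMod n := σ.trans cE with hS
  set T : Fin n ≃ ZMod n := τ.trans cE with hT
  have hxE : ∀ j, x j = Stmt12Aux.E n (S j) := by
    intro j
    rw [hσ j, Stmt12Aux.E, hS]
    simp only [Equiv.trans_apply]
    rw [hcEval]
  have hx'E : ∀ j, x' j = Stmt12Aux.E n (T j) := by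
    intro j
    rw [hτ j, Stmt12Aux.E, hT]
    simp only [Equiv.trans_apply]
    rw [hcEval]
  -- symmetric extension of hrep
  have frep : ∀ p q : Fin n, p ≠ q → f (x p) (x q) = f' (x' p) (x' q) := by
    intro p q hpq
    rcases lt_or_gt_of_ne hpq with h | h
    · exact hrep p q h
    · rw [hf.2.1, hf'.2.1]
      exact hrep q p h
  -- positivity of off-diagonal distances
  have apos : ∀ (U : Fin n ≃ ZMod n) (i k : Fin n), k ≠ i → 0 < gd (Stmt12Aux.E n (U i)) (Stmt12Aux.E n (U k)) := by
    intro U i k hk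
    rw [Stmt12Aux.gd_E]
    have hne : U i - U k ≠ 0 := sub_ne_zero.2 fun h => hk (U.injective h).symm
    have hd : 0 < Stmt12Aux.dd n (U i - U k) :=
      Nat.pos_of_ne_zero fun h => hne (Stmt12Aux.dd_zero_iff.1 h)
    have : (0:ℝ) < 2 * π / n := by
      have : (0:ℝ) < n := by exact_mod_cast Nat.pos_of_ne_zero hn
      positivity
    exact mul_pos this (by exact_mod_cast hd)
  -- distances coincide
  have key1 : ∀ i j, gd (x i) (x j) = gd (x' i) (x' j) := by
    intro i
    have hcmp : ∀ j k, gd (x i) (x j) < gd (x i) (x k) ↔ gd (x' i) (x' j) < gd (x' i) (x' k) := by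
      intro j k
      by_cases hj : j = i <;> by_cases hk : k = i
      · rw [hj, hk]; simp
      · have h1 : 0 < gd (x i) (x k) := by rw [hxE, hxE]; exact apos S i k hk
        have h2 : 0 < gd (x' i) (x' k) := by rw [hx'E, hx'E]; exact apos T i k hk
        rw [hj, Stmt12Aux.gd_self, Stmt12Aux.gd_self]
        exact iff_of_true h1 h2
      · rw [hk, Stmt12Aux.gd_self, Stmt12Aux.gd_self]
        exact iff_of_false (not_lt.2 (Stmt12Aux.gd_nonneg _ _))
          (not_lt.2 (Stmt12Aux.gd_nonneg _ _))
      · rw [Stmt12Aux.bilip_iff hcl hf (x i) (x j) (x k),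
          Stmt12Aux.bilip_iff hcl hf' (x' i) (x' j) (x' k),
          frep i j (Ne.symm hj), frep i k (Ne.symm hk)]
    have hms : Multiset.map (fun j => gd (x i) (x j)) Finset.univ.val
        = Multiset.map (fun j => gd (x' i) (x' j)) Finset.univ.val := by
      have e1 : (fun j => gd (x i) (x j)) = fun j => gd (Stmt12Aux.E n (S i)) (Stmt12Aux.E n (S j)) := by
        funext j; rw [hxE, hxE]
      have e2 : (fun j => gd (x' i) (x' j)) = fun j => gd (Stmt12Aux.E n (T i)) (Stmt12Aux.E n (T j)) := by
        funext j; rw [hx'E, hx'E]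
      rw [e1, e2, Stmt12Aux.ms_gd S i, Stmt12Aux.ms_gd T i]
    exact fun j => Stmt12Aux.rank_eq _ _ hcmp hms j
  -- dd's coincide
  have key2 : ∀ i j, Stmt12Aux.dd n (S i - S j) = Stmt12Aux.dd n (T i - T j) := by
    intro i j
    have h := key1 i j
    rw [hxE, hxE, hx'E, hx'E, Stmt12Aux.gd_E, Stmt12Aux.gd_E] at h
    have hfac : (2 * π / n : ℝ) ≠ 0 := by
      have : (0:ℝ) < n := by exact_mod_cast Nat.pos_of_ne_zero hn
      positivity
    exact_mod_cast mul_left_cancel₀ hfac h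
  set ρ : ZMod n ≃ ZMod n := T.symm.trans S with hρ
  have hρT : ∀ i, ρ (T i) = S i := by intro i; simp [hρ]
  have hρdd : ∀ a b, Stmt12Aux.dd n (ρ a - ρ b) = Stmt12Aux.dd n (a - b) := by
    intro a b
    have h := key2 (T.symm a) (T.symm b)
    simpa [hρ] using h
  have hpm : ∀ a b, ρ a - ρ b = a - b ∨ ρ a - ρ b = -(a - b) :=
    fun a b => Stmt12Aux.dd_inj (hρdd a b)
  set ε : ZMod n := ρ 1 - ρ 0 with hεdef
  have heps : ε = 1 ∨ ε = -1 := by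
    have := hpm 1 0
    simpa using this
  have hs : ∀ a, ρ (a + 1) - ρ a = 1 ∨ ρ (a + 1) - ρ a = -1 := by
    intro a
    have := hpm (a + 1) a
    simpa using this
  have hconst : ∀ a, ρ (a + 1) - ρ a = ε := by
    by_cases h12 : (1 : ZMod n) = -1
    · intro a
      rcases hs a with h | h <;> rcases heps with h' | h' <;> rw [h, h'] <;>
        first | rfl | exact h12 | exact h12.symm
    · have h2 : (2 : ZMod n) ≠ 0 := by
        intro h
        apply h12
        have h3 : (1 : ZMod n) + 1 = 0 := by rw [← h]; norm_num
        linear_combination h3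
      have hadj : ∀ b, ρ (b + 1 + 1) - ρ (b + 1) = ρ (b + 1) - ρ b := by
        intro b
        rcases hs (b + 1) with h1 | h1 <;> rcases hs b with h0 | h0 <;> rw [h1, h0]
        all_goals try rfl
        all_goals
          exfalso
          have hb : ρ (b + 1 + 1) = ρ b := by
            have h3 : ρ (b + 1 + 1) - ρ b
                = (ρ (b + 1 + 1) - ρ (b + 1)) + (ρ (b + 1) - ρ b) := by ring
            rw [h1, h0] at h3
            have h4 : ρ (b + 1 + 1) - ρ b = 0 := by rw [h3]; ring
            exact sub_eq_zero.1 h4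
          exact h2 (by linear_combination ρ.injective hb)
      have hnat : ∀ m : ℕ, ρ ((m : ZMod n) + 1) - ρ (m : ZMod n) = ε := by
        intro m
        induction m with
        | zero => simpa using hεdef.symm
        | succ k ih =>
          push_cast
          rw [hadj]
          exact ih
      intro a
      have := hnat a.val
      rwa [ZMod.natCast_zmod_val] at this
  have hstep : ∀ a, ρ (a + 1) = ρ a + ε := by
    intro a
    have := hconst a
    linear_combination this
  have haff : ∀ a, ρ a = ρ 0 + ε * a := by
    have hnat2 : ∀ m : ℕ, ρ ((m : ZMod n)) = ρ 0 + ε * m := by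
      intro m
      induction m with
      | zero => simp
      | succ k ih =>
        push_cast
        rw [hstep, ih]
        ring
    intro a
    have := hnat2 a.val
    rwa [ZMod.natCast_zmod_val] at this
  have hfin : ∀ i, S i = ρ 0 + ε * T i := by
    intro i
    rw [← hρT i]
    exact haff (T i)
  rcases heps with hε | hε
  · refine ⟨rotation (Stmt12Aux.E n (ρ 0)), fun i => ?_⟩
    rw [hxE i, hx'E i, rotation_apply]
    have h5 : S i = ρ 0 + T i := by rw [hfin i, hε, one_mul]
    rw [h5, Stmt12Aux.E_add]
    exact Circle.coe_mul _ _
  · refine ⟨Complex.conjLIE.trans (rotation (Stmt12Aux.E n (ρ 0))), fun i => ?_⟩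
    rw [hxE i, hx'E i, LinearIsometryEquiv.trans_apply, Complex.conjLIE_apply, rotation_apply]
    have h5 : S i = ρ 0 + (- T i) := by rw [hfin i, hε]; ring
    rw [h5, Stmt12Aux.E_add, Circle.coe_mul, Stmt12Aux.E_neg_coe]
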